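/- Fix an integer n ≥ 0 and real parameters p, q. In the ring of formal power series ℝ[[X]], the generating function of the restricted partition function has the product form: (∏_{j=0}^{n} (1 − (1 + j·p + (n−j)·q)·X)) · (∑_{m=0}^{∞} R(n+1+m, n; p, q)·X^m) = 1. Equivalently, ∑_{L ≥ n+1} R(L, n; p, q)·x^{L−n−1} = ∏_{j=0}^{n} 1/(1 − (1 + j·p + (n−j)·q)·x) as formal power series. -/

import Mathlib

open Finset

/-- The stationary weight of a word `a` with entries in `{0,1}` (encoded as `Fin 2`):
the product over positions `i` with `a i = 0` of `1 + p·m_i(a) + q·n_i(a)`,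
where `m_i(a)` (resp. `n_i(a)`) is the number of `1`'s strictly before (resp. after) `i`. -/
noncomputable def wt (p q : ℝ) {m : ℕ} (a : Fin m → Fin 2) : ℝ :=
  ∏ i ∈ univ.filter (fun i => a i = 0),
    (1 + p * ((univ.filter (fun j => j < i ∧ a j = 1)).card : ℝ)
       + q * ((univ.filter (fun j => i < j ∧ a j = 1)).card : ℝ))

/-- The number of `1`'s in the word `a`. -/
def ones {m : ℕ} (a : Fin m → Fin 2) : ℕ := (univ.filter (fun i => a i = 1)).card

/-- The restricted partition function `R(L, n; p, q)`: the sum of the weights `wt p q a`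
over all words `a` of length `L - 1` with entries in `{0,1}` having exactly `n` ones. -/
noncomputable def R (L n : ℕ) (p q : ℝ) : ℝ :=
  ∑ a ∈ univ.filter (fun a : Fin (L - 1) → Fin 2 => ones a = n), wt p q a

/-! ### Auxiliary definitions -/

def mcnt {L : ℕ} (a : Fin L → Fin 2) (i : Fin L) : ℕ :=
  (univ.filter (fun j => j < i ∧ a j = 1)).card
def ncnt {L : ℕ} (a : Fin L → Fin 2) (i : Fin L) : ℕ :=
  (univ.filter (fun j => i < j ∧ a j = 1)).card

noncomputable def wtr (p q r : ℝ) {L : ℕ} (a : Fin L → Fin 2) : ℝ :=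
  ∏ i, if a i = 0 then 1 + p * (r + (mcnt a i : ℝ)) + q * (ncnt a i : ℝ) else 1

noncomputable def T (p q r : ℝ) (n L : ℕ) : ℝ :=
  ∑ a : Fin L → Fin 2, if ones a = n then wtr p q r a else 0

lemma ones_cons {L : ℕ} (b0 : Fin 2) (b : Fin L → Fin 2) :
    ones (Fin.cons b0 b) = (if b0 = 1 then 1 else 0) + ones b := by
  rw [ones, ones, Finset.card_filter, Finset.card_filter, Fin.sum_univ_succ]
  simp only [Fin.cons_zero, Fin.cons_succ]

lemma mcnt_cons_succ {L : ℕ} (b0 : Fin 2) (b : Fin L → Fin 2) (i : Fin L) :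
    mcnt (Fin.cons b0 b) i.succ = (if b0 = 1 then 1 else 0) + mcnt b i := by
  rw [mcnt, mcnt, Finset.card_filter, Finset.card_filter, Fin.sum_univ_succ]
  simp only [Fin.cons_zero, Fin.cons_succ, Fin.succ_pos, true_and, Fin.succ_lt_succ_iff]

lemma ncnt_cons_succ {L : ℕ} (b0 : Fin 2) (b : Fin L → Fin 2) (i : Fin L) :
    ncnt (Fin.cons b0 b) i.succ = ncnt b i := by
  rw [ncnt, ncnt, Finset.card_filter, Finset.card_filter, Fin.sum_univ_succ]
  simp only [Fin.cons_zero, Fin.cons_succ, Fin.succ_lt_succ_iff, Fin.not_lt_zero,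
    false_and, if_false, zero_add]

lemma mcnt_cons_zero {L : ℕ} (b0 : Fin 2) (b : Fin L → Fin 2) :
    mcnt (Fin.cons b0 b) 0 = 0 := by
  rw [mcnt, Finset.card_filter]
  apply Finset.sum_eq_zero
  intro j _
  simp [Fin.not_lt_zero]

lemma ncnt_cons_zero {L : ℕ} (b0 : Fin 2) (b : Fin L → Fin 2) :
    ncnt (Fin.cons b0 b) 0 = ones b := by
  rw [ncnt, ones, Finset.card_filter, Finset.card_filter, Fin.sum_univ_succ]
  simp only [Fin.cons_zero, Fin.cons_succ, lt_self_iff_false, false_and, if_false,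
    zero_add, Fin.succ_pos, true_and]

lemma wtr_cons_zero (p q r : ℝ) {L : ℕ} (b : Fin L → Fin 2) :
    wtr p q r (Fin.cons 0 b) = (1 + p * r + q * (ones b : ℝ)) * wtr p q r b := by
  rw [wtr, Fin.prod_univ_succ, wtr]
  congr 1
  · rw [Fin.cons_zero, if_pos rfl, mcnt_cons_zero, ncnt_cons_zero]
    norm_num
  · apply Finset.prod_congr rfl
    intro i _
    rw [Fin.cons_succ, mcnt_cons_succ, ncnt_cons_succ]
    norm_num

lemma wtr_cons_one (p q r : ℝ) {L : ℕ} (b : Fin L → Fin 2) :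
    wtr p q r (Fin.cons 1 b) = wtr p q (r + 1) b := by
  rw [wtr, Fin.prod_univ_succ, wtr]
  rw [Fin.cons_zero, if_neg (by decide), one_mul]
  apply Finset.prod_congr rfl
  intro i _
  rw [Fin.cons_succ, mcnt_cons_succ, ncnt_cons_succ, if_pos rfl]
  split
  · push_cast; ring_nf
  · rfl

lemma T_zero (p q r : ℝ) (n : ℕ) : T p q r n 0 = if n = 0 then 1 else 0 := by
  rw [T]
  rw [Finset.sum_eq_single (fun i : Fin 0 => i.elim0)]
  · simp [ones, wtr, eq_comm]
  · intro b _ hb; exact absurd (funext fun i => i.elim0) hb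
  · intro h; exact absurd (Finset.mem_univ _) h

lemma ones_le {L : ℕ} (a : Fin L → Fin 2) : ones a ≤ L := by
  calc ones a ≤ (univ : Finset (Fin L)).card := Finset.card_filter_le _ _
  _ = L := by simp

lemma T_of_gt (p q r : ℝ) {n L : ℕ} (h : L < n) : T p q r n L = 0 := by
  rw [T]
  apply Finset.sum_eq_zero
  intro a _
  rw [if_neg]
  exact fun hc => absurd (hc ▸ ones_le a) (by omega)

lemma T_succ (p q r : ℝ) (n L : ℕ) :
    T p q r n (L + 1) = (1 + p * r + q * n) * T p q r n L +
      (if n = 0 then 0 else T p q (r + 1) (n - 1) L) := by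
  rw [T, ← Equiv.sum_comp (Fin.consEquiv (fun _ : Fin (L + 1) => Fin 2))]
  rw [Fintype.sum_prod_type, Fin.sum_univ_two]
  simp only [show ∀ (x : Fin 2) (b : Fin L → Fin 2),
    (Fin.consEquiv (fun _ : Fin (L + 1) => Fin 2)) (x, b) = Fin.cons x b from fun _ _ => rfl]
  have h0 : ∑ b : Fin L → Fin 2, (if ones (Fin.cons 0 b) = n then wtr p q r (Fin.cons 0 b) else 0)
      = (1 + p * r + q * n) * T p q r n L := by
    rw [T, Finset.mul_sum]
    apply Finset.sum_congr rfl
    intro b _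
    have hoc : ones (Fin.cons (0 : Fin 2) b) = ones b := by rw [ones_cons]; simp
    rw [hoc, wtr_cons_zero]
    split
    · rename_i h; rw [h]
    · rw [mul_zero]
  have h1 : ∑ b : Fin L → Fin 2, (if ones (Fin.cons 1 b) = n then wtr p q r (Fin.cons 1 b) else 0)
      = (if n = 0 then 0 else T p q (r + 1) (n - 1) L) := by
    split
    · rename_i h; subst h
      apply Finset.sum_eq_zero
      intro b _
      have hoc : ones (Fin.cons (1 : Fin 2) b) = 1 + ones b := by rw [ones_cons]; simp
      rw [hoc, if_neg (by omega)]
    · rename_i h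
      rw [T]
      apply Finset.sum_congr rfl
      intro b _
      have hoc : ones (Fin.cons (1 : Fin 2) b) = 1 + ones b := by rw [ones_cons]; simp
      rw [hoc, wtr_cons_one]
      exact if_congr (by omega) rfl rfl
  rw [h0, h1]

open PowerSeries in
lemma one_sub_mul_mk (c : ℝ) (f : ℕ → ℝ) :
    (1 - PowerSeries.C c * PowerSeries.X) * PowerSeries.mk f =
      PowerSeries.mk (fun m => match m with | 0 => f 0 | (k+1) => f (k+1) - c * f k) := by
  ext m
  rw [sub_mul, one_mul, map_sub, mul_assoc, coeff_C_mul, coeff_mk]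
  cases m with
  | zero => rw [coeff_zero_X_mul, coeff_mk]; simp
  | succ k => rw [coeff_succ_X_mul, coeff_mk, coeff_mk]

open PowerSeries in
lemma mk_eq_one {f : ℕ → ℝ} (h0 : f 0 = 1) (hs : ∀ k, f (k + 1) = 0) :
    PowerSeries.mk f = 1 := by
  ext m
  rw [coeff_mk, coeff_one]
  cases m with
  | zero => simpa using h0
  | succ k => simpa using hs k

open PowerSeries in
lemma key (p q : ℝ) : ∀ n : ℕ, ∀ r : ℝ,
    (∏ j ∈ Finset.range (n + 1),
        (1 - PowerSeries.C (1 + (r + (j : ℝ)) * p + ((n - j : ℕ) : ℝ) * q) * PowerSeries.X))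
      * PowerSeries.mk (fun m => T p q r n (n + m)) = 1 := by
  intro n
  induction n with
  | zero =>
    intro r
    rw [Finset.prod_range_one, one_sub_mul_mk]
    apply mk_eq_one
    · simpa using T_zero p q r 0
    · intro k
      simp only [Nat.zero_add]
      rw [T_succ]
      simp only [if_pos rfl, add_zero]
      push_cast
      ring
  | succ n ih =>
    intro r
    rw [Finset.prod_range_succ']
    have hre : (∏ j ∈ Finset.range (n + 1),
        (1 - PowerSeries.C (1 + (r + ((j + 1 : ℕ) : ℝ)) * p + ((n + 1 - (j + 1) : ℕ) : ℝ) * q)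
          * PowerSeries.X)) =
        ∏ j ∈ Finset.range (n + 1),
        (1 - PowerSeries.C (1 + ((r + 1) + (j : ℝ)) * p + ((n - j : ℕ) : ℝ) * q)
          * PowerSeries.X) := by
      apply Finset.prod_congr rfl
      intro j hj
      have h1 : ((n + 1 - (j + 1) : ℕ) : ℝ) = ((n - j : ℕ) : ℝ) := by
        congr 1; omega
      have h2 : (1 + (r + ((j + 1 : ℕ) : ℝ)) * p + ((n - j : ℕ) : ℝ) * q)
          = (1 + ((r + 1) + (j : ℝ)) * p + ((n - j : ℕ) : ℝ) * q) := by
        push_cast; ring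
      rw [h1, h2]
    rw [hre, mul_assoc]
    have hmk : (1 - PowerSeries.C (1 + (r + ((0 : ℕ) : ℝ)) * p + ((n + 1 - 0 : ℕ) : ℝ) * q)
          * PowerSeries.X) * PowerSeries.mk (fun m => T p q r (n + 1) (n + 1 + m)) =
        PowerSeries.mk (fun m => T p q (r + 1) n (n + m)) := by
      rw [one_sub_mul_mk]
      apply PowerSeries.ext
      intro m
      rw [PowerSeries.coeff_mk, PowerSeries.coeff_mk]
      cases m with
      | zero =>
        show T p q r (n + 1) (n + 1 + 0) = T p q (r + 1) n (n + 0)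
        rw [Nat.add_zero, Nat.add_zero, T_succ, T_of_gt p q r (Nat.lt_succ_self n),
          if_neg (Nat.succ_ne_zero n), Nat.add_sub_cancel, mul_zero, zero_add]
        rfl
      | succ k =>
        show T p q r (n + 1) (n + 1 + (k + 1)) - _ * T p q r (n + 1) (n + 1 + k)
          = T p q (r + 1) n (n + (k + 1))
        rw [show n + 1 + (k + 1) = (n + 1 + k) + 1 from rfl, T_succ,
          if_neg (Nat.succ_ne_zero n), Nat.add_sub_cancel,
          show n + (k + 1) = n + 1 + k by omega]
        have : ((n + 1 - 0 : ℕ) : ℝ) = (n : ℝ) + 1 := by push_cast; ring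
        rw [this]
        push_cast
        ring
    rw [hmk]
    exact ih (r + 1)

lemma wt_eq_wtr (p q : ℝ) {L : ℕ} (a : Fin L → Fin 2) : wt p q a = wtr p q 0 a := by
  rw [wt, Finset.prod_filter, wtr]
  apply Finset.prod_congr rfl
  intro i _
  rw [mcnt, ncnt]
  split
  · rw [zero_add]
  · rfl

/-- the product form of the ordinary generating function of the restricted
partition function, as an identity of formal power series in `ℝ[[X]]`. -/
theorem R_ogf (n : ℕ) (p q : ℝ) :
    (∏ j ∈ Finset.range (n + 1),
        (1 - PowerSeries.C (1 + (j : ℝ) * p + ((n - j : ℕ) : ℝ) * q) * PowerSeries.X))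
      * PowerSeries.mk (fun m => R (n + 1 + m) n p q) = 1 := by
  have h1 : (∏ j ∈ Finset.range (n + 1),
      (1 - PowerSeries.C (1 + (j : ℝ) * p + ((n - j : ℕ) : ℝ) * q) * PowerSeries.X)) =
      ∏ j ∈ Finset.range (n + 1),
      (1 - PowerSeries.C (1 + ((0 : ℝ) + (j : ℝ)) * p + ((n - j : ℕ) : ℝ) * q)
        * PowerSeries.X) := by
    apply Finset.prod_congr rfl
    intro j _
    rw [zero_add]
  have h2 : (fun m => R (n + 1 + m) n p q) = (fun m => T p q 0 n (n + m)) := by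
    funext m
    rw [show n + 1 + m = (n + m) + 1 by omega, R, T, Finset.sum_filter]
    apply Finset.sum_congr rfl
    intro a _
    rw [wt_eq_wtr]
  rw [h1, h2]
  exact key p q n 0
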